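/- Let α ∈ (0,1) be irrational and n ≥ 1 with L = k_0(n) ≥ 2 (or L ≥ 1 if α < 1/2). Then ‖nα‖ < ‖q_L α‖ if and only if the Ostrowski representation of n has the form n = q_L + Σ_{k=L+1+2t}^{N} b_k q_k for some t ≥ 0 with b_{L+1+2t} > 0 (i.e., the second-lowest nonzero digit occurs at an index whose parity is opposite to L). -/

import Mathlib

/-- Gauss-map iterates of `α`. -/
noncomputable def cfFrac (α : ℝ) : ℕ → ℝ
  | 0 => α
  | k + 1 => Int.fract (1 / cfFrac α k)

/-- Partial quotients of `α` (1-indexed, `cfA α 0 = 0` unused). -/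
noncomputable def cfA (α : ℝ) : ℕ → ℕ
  | 0 => 0
  | k + 1 => (⌊1 / cfFrac α k⌋).toNat

/-- Numerators of the convergents of `α`. -/
noncomputable def cfP (α : ℝ) : ℕ → ℕ
  | 0 => 0
  | 1 => 1
  | k + 2 => cfA α (k + 2) * cfP α (k + 1) + cfP α k

/-- Denominators of the convergents of `α`. -/
noncomputable def cfQ (α : ℝ) : ℕ → ℕ
  | 0 => 1
  | 1 => cfA α 1
  | k + 2 => cfA α (k + 2) * cfQ α (k + 1) + cfQ α k

/-- Distance from `x` to the nearest integer. -/
noncomputable def distNearInt (x : ℝ) : ℝ := min (Int.fract x) (1 - Int.fract x)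

/-- `b` is the sequence of digits of an Ostrowski representation of `n` w.r.t. `α`:
`n = Σ b_k q_k` with `0 ≤ b_0 ≤ a_1 - 1`, `0 ≤ b_k ≤ a_{k+1}` for `k ≥ 1`, and
`b_{k-1} = 0` whenever `b_k = a_{k+1}`. -/
def OstrowskiRep (α : ℝ) (n : ℕ) (b : ℕ → ℕ) : Prop :=
  b 0 ≤ cfA α 1 - 1 ∧
  (∀ k, 1 ≤ k → b k ≤ cfA α (k + 1)) ∧
  (∀ k, 1 ≤ k → b k = cfA α (k + 1) → b (k - 1) = 0) ∧
  ∃ N, (∀ k, N < k → b k = 0) ∧ n = ∑ k ∈ Finset.range (N + 1), b k * cfQ α k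


/-- `cfE α (k+1) = |q_k α - p_k|`; `cfE α 0 = 1`. -/
noncomputable def cfE (α : ℝ) : ℕ → ℝ
  | 0 => 1
  | k + 1 => cfFrac α k * cfE α k

/-- The signed error `θ_k = q_k α - p_k`. -/
noncomputable def cfθ (α : ℝ) (k : ℕ) : ℝ := (cfQ α k : ℝ) * α - (cfP α k : ℝ)

lemma distNearInt_int_add (p : ℤ) (s : ℝ) (h : |s| ≤ 1/2) :
    distNearInt ((p:ℝ) + s) = |s| := by
  obtain ⟨hl, hr⟩ := abs_le.1 h
  rw [distNearInt, Int.fract_intCast_add]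
  rcases le_or_gt 0 s with hs | hs
  · rw [Int.fract_eq_self.2 ⟨hs, by linarith⟩, abs_of_nonneg hs]
    exact min_eq_left (by linarith)
  · have hf : Int.fract s = s + 1 := by
      have h1 := Int.fract_add_intCast s 1
      rw [show ((1:ℤ):ℝ) = (1:ℝ) by norm_num] at h1
      have h2 : Int.fract (s+1) = s+1 := Int.fract_eq_self.2 ⟨by linarith, by linarith⟩
      rw [← h1, h2]
    rw [hf, abs_of_neg hs]
    rw [min_eq_right (by linarith)]
    ring

section
variable {α : ℝ} (hα : α ∈ Set.Ioo (0:ℝ) 1) (hirr : Irrational α)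
include hα hirr

lemma cfFrac_prop (k : ℕ) :
    cfFrac α k ∈ Set.Ioo (0:ℝ) 1 ∧ Irrational (cfFrac α k) := by
  induction k with
  | zero => exact ⟨hα, hirr⟩
  | succ k ih =>
    obtain ⟨⟨h0, h1⟩, hi⟩ := ih
    have hinv : Irrational (1 / cfFrac α k) := by rw [one_div]; exact hi.inv
    have hfr : Irrational (Int.fract (1 / cfFrac α k)) := by
      rw [Int.fract]; exact hinv.sub_intCast _
    have hne : Int.fract (1 / cfFrac α k) ≠ 0 := by
      intro h; rw [h] at hfr; exact hfr.ne_int 0 (by norm_num)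
    refine ⟨⟨?_, ?_⟩, by simpa [cfFrac] using hfr⟩
    · show 0 < cfFrac α (k+1)
      have := Int.fract_nonneg (1 / cfFrac α k)
      simp only [cfFrac]
      exact lt_of_le_of_ne this (Ne.symm hne)
    · show cfFrac α (k+1) < 1
      simpa [cfFrac] using Int.fract_lt_one (1 / cfFrac α k)

lemma one_lt_inv_cfFrac (k : ℕ) : 1 < 1 / cfFrac α k := by
  obtain ⟨⟨h0, h1⟩, _⟩ := cfFrac_prop hα hirr k
  rw [lt_div_iff₀ h0]; linarith

lemma cfA_cast (k : ℕ) :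
    (cfA α (k+1) : ℝ) = 1 / cfFrac α k - cfFrac α (k+1) := by
  have h1 : (1:ℤ) ≤ ⌊1 / cfFrac α k⌋ := by
    exact_mod_cast Int.le_floor.2 (by exact_mod_cast (one_lt_inv_cfFrac hα hirr k).le)
  have h2 : ((⌊1 / cfFrac α k⌋).toNat : ℤ) = ⌊1 / cfFrac α k⌋ := Int.toNat_of_nonneg (by linarith)
  have h3 : ((⌊1 / cfFrac α k⌋).toNat : ℝ) = ((⌊1 / cfFrac α k⌋ : ℤ) : ℝ) := by exact_mod_cast h2
  show ((⌊1 / cfFrac α k⌋).toNat : ℝ) = _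
  rw [h3]
  have := Int.self_sub_fract (1 / cfFrac α k)
  simp only [cfFrac]
  linarith

lemma cfE_pos (k : ℕ) : 0 < cfE α k := by
  induction k with
  | zero => norm_num [cfE]
  | succ k ih => exact mul_pos (cfFrac_prop hα hirr k).1.1 ih

lemma cfE_succ_lt (k : ℕ) : cfE α (k+1) < cfE α k := by
  have h := (cfFrac_prop hα hirr k).1
  have := cfE_pos hα hirr k
  calc cfE α (k+1) = cfFrac α k * cfE α k := rfl
    _ < 1 * cfE α k := by apply mul_lt_mul_of_pos_right h.2 this
    _ = cfE α k := one_mul _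

lemma cfE_anti {k m : ℕ} (h : k ≤ m) : cfE α m ≤ cfE α k := by
  induction m with
  | zero => simp_all
  | succ m ih =>
    rcases Nat.lt_or_ge k (m+1) with h' | h'
    · exact le_trans (cfE_succ_lt hα hirr m).le (ih (by omega))
    · have : k = m + 1 := by omega
      simp [this]

lemma cfE_rec (k : ℕ) :
    cfE α k = cfA α (k+1) * cfE α (k+1) + cfE α (k+2) := by
  have h0 := (cfFrac_prop hα hirr k).1.1
  have e1 : cfE α (k+1) = cfFrac α k * cfE α k := rfl
  have e2 : cfE α (k+2) = cfFrac α (k+1) * cfE α (k+1) := rfl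
  rw [e2, cfA_cast hα hirr k, e1]
  field_simp
  ring

omit hα hirr in
lemma cfθ_rec (k : ℕ) : cfθ α (k+2) = (cfA α (k+2) : ℝ) * cfθ α (k+1) + cfθ α k := by
  simp only [cfθ, cfQ, cfP]
  push_cast
  ring

lemma cfθ_eq (k : ℕ) : cfθ α k = (-1)^k * cfE α (k+1) := by
  have key : ∀ k, cfθ α k = (-1)^k * cfE α (k+1) ∧
      cfθ α (k+1) = (-1)^(k+1) * cfE α (k+2) := by
    intro k
    induction k with
    | zero =>
      constructor
      · show (cfQ α 0 : ℝ) * α - (cfP α 0 : ℝ) = _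
        simp [cfQ, cfP, cfE, cfFrac]
      · show (cfQ α 1 : ℝ) * α - (cfP α 1 : ℝ) = _
        have h0 : (0:ℝ) < α := hα.1
        have hc := cfA_cast hα hirr 0
        simp only [cfQ, cfP, cfE, cfFrac] at *
        rw [hc]
        push_cast
        field_simp
        ring
    | succ k ih =>
      refine ⟨ih.2, ?_⟩
      rw [cfθ_rec]
      rw [ih.1, ih.2]
      have := cfE_rec hα hirr (k+1)
      rw [show (-1:ℝ)^(k+1+1) = (-1)^k by ring, show (-1:ℝ)^(k+1) = -(-1)^k by ring]
      linear_combination ((-1:ℝ))^k * this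
  exact (key k).1

lemma cfE_two_lt_half : cfE α 2 < 1/2 := by
  have ha0 := hα.1
  have ha1 := hα.2
  have h01 := (cfFrac_prop hα hirr 1).1
  have hE2 : cfE α 2 = cfFrac α 1 * α := by simp [cfE, cfFrac]
  rcases lt_trichotomy α (1/2) with h | h | h
  · rw [hE2]
    have h2 := mul_lt_mul_of_pos_right h01.2 ha0
    rw [one_mul] at h2
    linarith
  · exfalso
    have : α = ((1/2 : ℚ) : ℝ) := by rw [h]; norm_num
    exact (this ▸ hirr) ⟨(1/2 : ℚ), rfl⟩
  · have h1 : (1:ℝ) < 1/α := by rw [lt_div_iff₀ ha0]; linarith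
    have h2 : 1/α < 2 := by rw [div_lt_iff₀ ha0]; linarith
    have hfl : ⌊1/α⌋ = 1 := by
      apply Int.floor_eq_iff.2
      constructor
      · push_cast; linarith
      · push_cast; linarith
    have hf1 : cfFrac α 1 = 1/α - 1 := by
      show Int.fract (1 / cfFrac α 0) = _
      show Int.fract (1 / α) = _
      rw [Int.fract, hfl]; norm_num
    rw [hE2, hf1]
    have hfe : (1/α - 1) * α = 1 - α := by field_simp
    rw [hfe]; linarith

end

lemma tail_bound {α : ℝ} (hα : α ∈ Set.Ioo (0:ℝ) 1) (hirr : Irrational α)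
    (b : ℕ → ℕ) (hdig : ∀ k, 1 ≤ k → b k ≤ cfA α (k + 1)) (N : ℕ)
    (hzero : ∀ k, N < k → b k = 0) :
    ∀ j m, N + 1 ≤ m + j → 1 ≤ m →
      ((b m : ℝ) - 1) * cfE α (m+1) < (-1)^m * ∑ k ∈ Finset.Ico m (N+1), (b k : ℝ) * cfθ α k ∧
      (-1)^m * ∑ k ∈ Finset.Ico m (N+1), (b k : ℝ) * cfθ α k < cfE α m := by
  intro j
  induction j with
  | zero =>
    intro m hj hm
    have hemp : Finset.Ico m (N+1) = ∅ := Finset.Ico_eq_empty (by omega)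
    rw [hemp]
    simp only [Finset.sum_empty, mul_zero]
    have hbm : b m = 0 := hzero m (by omega)
    rw [hbm]
    constructor
    · push_cast
      have := cfE_pos hα hirr (m+1)
      nlinarith
    · exact cfE_pos hα hirr m
  | succ j ih =>
    intro m hj hm
    by_cases hmN : N + 1 ≤ m
    · have hemp : Finset.Ico m (N+1) = ∅ := Finset.Ico_eq_empty (by omega)
      rw [hemp]
      simp only [Finset.sum_empty, mul_zero]
      have hbm : b m = 0 := hzero m (by omega)
      rw [hbm]
      constructor
      · push_cast
        have := cfE_pos hα hirr (m+1)
        nlinarith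
      · exact cfE_pos hα hirr m
    · have hIH := ih (m+1) (by omega) (by omega)
      have hsplit := Finset.sum_eq_sum_Ico_succ_bot (show m < N+1 by omega)
        (fun k => (b k:ℝ) * cfθ α k)
      have hθ := cfθ_eq hα hirr m
      have hsq : (-1:ℝ)^m * (-1)^m = 1 := by
        rw [← pow_add]; exact Even.neg_one_pow ⟨m, rfl⟩
      have hEq : (-1)^m * ∑ k ∈ Finset.Ico m (N+1), (b k : ℝ) * cfθ α k
          = (b m:ℝ) * cfE α (m+1)
            - (-1)^(m+1) * ∑ k ∈ Finset.Ico (m+1) (N+1), (b k : ℝ) * cfθ α k := by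
        rw [hsplit, hθ]
        linear_combination ((b m:ℝ) * cfE α (m+1)) * hsq
      rw [hEq]
      constructor
      · have := hIH.2
        linarith
      · have h1 := hIH.1
        have h2 : (-1:ℝ) * cfE α (m+2) ≤ ((b (m+1):ℝ) - 1) * cfE α (m+2) := by
          apply mul_le_mul_of_nonneg_right _ (cfE_pos hα hirr (m+2)).le
          have : (0:ℝ) ≤ (b (m+1):ℝ) := Nat.cast_nonneg _
          linarith
        have h3 : (b m:ℝ) ≤ (cfA α (m+1) : ℝ) := Nat.cast_le.2 (hdig m hm)
        have h4 := cfE_rec hα hirr m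
        have h5 := (cfE_pos hα hirr (m+1)).le
        have h6 := mul_le_mul_of_nonneg_right h3 h5
        linarith

theorem stmt10 (α : ℝ) (hα : α ∈ Set.Ioo (0:ℝ) 1) (hirr : Irrational α)
    (n : ℕ) (hn : 1 ≤ n) (b : ℕ → ℕ) (hb : OstrowskiRep α n b)
    (L : ℕ) (hL : b L ≠ 0) (hL0 : ∀ k, k < L → b k = 0)
    (hLlow : 2 ≤ L ∨ (α < 1 / 2 ∧ 1 ≤ L)) :
    distNearInt ((n : ℝ) * α) < distNearInt ((cfQ α L : ℝ) * α) ↔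
      (b L = 1 ∧ ∃ k, L < k ∧ b k ≠ 0 ∧ (∀ j, L < j → j < k → b j = 0) ∧ Odd (k - L)) := by
  classical
  obtain ⟨hb0, hdig, hcarry, N, hzero, hsum⟩ := hb
  have hL1 : 1 ≤ L := by
    rcases hLlow with h | h
    · omega
    · exact h.2
  have hLN : L ≤ N := by by_contra h; push_neg at h; exact hL (hzero L h)
  set S : ℕ → ℝ := fun m => ∑ k ∈ Finset.Ico m (N+1), (b k:ℝ) * cfθ α k with hSdef
  have key : ∀ m, 1 ≤ m →
      ((b m:ℝ) - 1) * cfE α (m+1) < (-1)^m * S m ∧ (-1)^m * S m < cfE α m :=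
    fun m hm => tail_bound hα hirr b hdig N hzero (N+1) m (by omega) hm
  have hbL1 : (1:ℝ) ≤ (b L : ℝ) := by exact_mod_cast Nat.one_le_iff_ne_zero.2 hL
  have hposL : 0 < (-1)^L * S L := by
    have h0 : (0:ℝ) ≤ ((b L:ℝ) - 1) * cfE α (L+1) :=
      mul_nonneg (by linarith) (cfE_pos hα hirr (L+1)).le
    exact lt_of_le_of_lt h0 (key L hL1).1
  have habsL : |S L| = (-1)^L * S L := by
    have h1 : |(-1:ℝ)^L * S L| = |S L| := by
      rw [abs_mul, abs_pow, abs_neg, abs_one, one_pow, one_mul]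
    rw [← h1, abs_of_pos hposL]
  have hE1 : cfE α 1 = α := by simp [cfE, cfFrac]
  have hEhalf : cfE α L ≤ 1/2 := by
    rcases hLlow with h2 | ⟨hhalf, h1'⟩
    · exact le_trans (cfE_anti hα hirr h2) (cfE_two_lt_half hα hirr).le
    · calc cfE α L ≤ cfE α 1 := cfE_anti hα hirr h1'
        _ = α := hE1
        _ ≤ 1/2 := hhalf.le
  have hSlt : |S L| < cfE α L := by rw [habsL]; exact (key L hL1).2
  have hqp : ∀ k, (cfQ α k:ℝ) * α = (cfP α k:ℝ) + cfθ α k := fun k => by rw [cfθ]; ring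
  have hnα : (n:ℝ) * α = ((∑ k ∈ Finset.range (N+1), b k * cfP α k : ℕ) : ℝ) + S L := by
    have h1 : (n:ℝ) = ∑ k ∈ Finset.range (N+1), (b k:ℝ) * (cfQ α k:ℝ) := by
      rw [hsum]; push_cast; ring
    rw [h1, Finset.sum_mul]
    have h2 : ∀ k ∈ Finset.range (N+1),
        (b k:ℝ) * (cfQ α k:ℝ) * α = (b k:ℝ)*(cfP α k:ℝ) + (b k:ℝ)*cfθ α k := by
      intro k _
      rw [mul_assoc, hqp k]; ring
    rw [Finset.sum_congr rfl h2, Finset.sum_add_distrib]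
    congr 1
    · push_cast; ring
    · rw [Finset.range_eq_Ico,
        ← Finset.sum_Ico_consecutive (fun k => (b k:ℝ)*cfθ α k)
          (Nat.zero_le L) (show L ≤ N+1 by omega)]
      have hz : ∑ k ∈ Finset.Ico 0 L, (b k:ℝ)*cfθ α k = 0 :=
        Finset.sum_eq_zero (fun k hk => by
          rw [hL0 k (Finset.mem_Ico.1 hk).2]; simp)
      rw [hz, zero_add]
  have hdistn : distNearInt ((n:ℝ)*α) = |S L| := by
    rw [hnα]
    have h1 := distNearInt_int_add ((∑ k ∈ Finset.range (N+1), b k * cfP α k : ℕ) : ℤ)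
      (S L) (by linarith)
    push_cast at h1 ⊢
    exact h1
  have hdistq : distNearInt ((cfQ α L:ℝ)*α) = cfE α (L+1) := by
    have habs : |cfθ α L| = cfE α (L+1) := by
      rw [cfθ_eq hα hirr L, abs_mul, abs_pow, abs_neg, abs_one, one_pow, one_mul,
        abs_of_pos (cfE_pos hα hirr (L+1))]
    have hle : |cfθ α L| ≤ 1/2 := by
      rw [habs]
      have h2 := cfE_anti hα hirr (show 2 ≤ L+1 by omega)
      linarith [cfE_two_lt_half hα hirr]
    have h1 := distNearInt_int_add ((cfP α L : ℕ):ℤ) (cfθ α L) hle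
    push_cast at h1
    rw [hqp L, h1, habs]
  rw [hdistn, hdistq, habsL]
  by_cases hbL : b L = 1
  · have hsplitL : S L = (b L:ℝ)*cfθ α L + S (L+1) :=
      Finset.sum_eq_sum_Ico_succ_bot (show L < N+1 by omega) _
    have hθL := cfθ_eq hα hirr L
    have hsq : (-1:ℝ)^L*(-1)^L = 1 := by
      rw [← pow_add]; exact Even.neg_one_pow ⟨L, rfl⟩
    have hEqL : (-1)^L * S L = cfE α (L+1) + (-1)^L * S (L+1) := by
      rw [hsplitL, hθL, hbL]
      push_cast
      linear_combination (cfE α (L+1)) * hsq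
    have hiff1 : ((-1)^L * S L < cfE α (L+1)) ↔ (-1)^L * S (L+1) < 0 := by
      rw [hEqL]; constructor <;> intro <;> linarith
    rw [hiff1]
    by_cases hex : ∃ k, L < k ∧ b k ≠ 0
    · set k0 := Nat.find hex with hk0def
      have hk0 := Nat.find_spec hex
      have hmin : ∀ j, L < j → j < k0 → b j = 0 := by
        intro j hLj hjk
        by_contra hbj
        exact absurd (Nat.find_min' hex ⟨hLj, hbj⟩) (by omega)
      have hk0N : k0 ≤ N := by
        by_contra h; push_neg at h; exact hk0.2 (hzero _ h)
      have hSk : S (L+1) = S k0 := by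
        show (∑ k ∈ Finset.Ico (L+1) (N+1), (b k:ℝ)*cfθ α k)
          = ∑ k ∈ Finset.Ico k0 (N+1), (b k:ℝ)*cfθ α k
        rw [← Finset.sum_Ico_consecutive (fun k => (b k:ℝ)*cfθ α k)
          (show L+1 ≤ k0 by omega) (show k0 ≤ N+1 by omega)]
        have hz : ∑ k ∈ Finset.Ico (L+1) k0, (b k:ℝ)*cfθ α k = 0 :=
          Finset.sum_eq_zero (fun j hj => by
            have hj' := Finset.mem_Ico.1 hj
            rw [hmin j (by omega) hj'.2]; simp)
        rw [hz, zero_add]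
      have hposk : 0 < (-1)^k0 * S k0 := by
        have hbk1 : (1:ℝ) ≤ (b k0 : ℝ) := by
          exact_mod_cast Nat.one_le_iff_ne_zero.2 hk0.2
        have h0 : (0:ℝ) ≤ ((b k0:ℝ) - 1) * cfE α (k0+1) :=
          mul_nonneg (by linarith) (cfE_pos hα hirr (k0+1)).le
        exact lt_of_le_of_lt h0 (key k0 (by omega)).1
      have hparity : (-1:ℝ)^L * S (L+1) = (-1)^(k0 - L) * ((-1)^k0 * S k0) := by
        rw [hSk]
        have hpw : (-1:ℝ)^(k0-L) * (-1)^k0 = (-1)^L := by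
          rw [← pow_add, show k0 - L + k0 = L + 2*(k0 - L) by omega, pow_add, pow_mul]
          norm_num
        linear_combination (-(S k0)) * hpw
      constructor
      · intro hlt
        refine ⟨hbL, k0, hk0.1, hk0.2, hmin, ?_⟩
        by_contra hodd
        have heven : Even (k0 - L) := Nat.not_odd_iff_even.1 hodd
        rw [hparity, Even.neg_one_pow heven, one_mul] at hlt
        linarith
      · rintro ⟨-, k, hLk, hbk, hbetween, hoddk⟩
        have hk0le : k0 ≤ k := Nat.find_min' hex ⟨hLk, hbk⟩
        have hkeq : k = k0 := by
          by_contra hne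
          exact hk0.2 (hbetween k0 hk0.1 (by omega))
        have hodd0 : Odd (k0 - L) := hkeq ▸ hoddk
        rw [hparity, Odd.neg_one_pow hodd0]
        linarith
    · push_neg at hex
      have hS0 : S (L+1) = 0 :=
        Finset.sum_eq_zero (fun j hj => by
          have hj' := Finset.mem_Ico.1 hj
          rw [hex j (by omega)]; simp)
      constructor
      · intro h
        rw [hS0, mul_zero] at h
        exact absurd h (lt_irrefl 0)
      · rintro ⟨-, k, hLk, hbk, -, -⟩
        exact absurd (hex k hLk) hbk
  · have hbL2 : 2 ≤ b L := by omega
    have hbL2' : (2:ℝ) ≤ (b L:ℝ) := by exact_mod_cast hbL2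
    have hEp := cfE_pos hα hirr (L+1)
    constructor
    · intro h
      exfalso
      have h1 := (key L hL1).1
      nlinarith
    · rintro ⟨h1, -⟩
      exact absurd h1 hbL
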